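/- Let K be a field. Then for every proper ideal I of the Laurent polynomial ring K[T,T⁻¹] there exists a sequence (A_m)_{m∈ℕ} of ideals of K[T,T⁻¹] such that ⋂_{m∈ℕ} A_m ⊆ I and A_m ⊄ I for every m; in particular, no proper ideal of K[T,T⁻¹] is strongly prime. -/

import Mathlib

open Polynomial LaurentPolynomial

/-- No proper ideal of the Laurent polynomial ring `K[T,T⁻¹]` over a field is
strongly prime: every proper ideal `I` admits a sequence of ideals whose
intersection lies in `I` while no member of the sequence does. -/
theorem stmt_4 {K : Type*} [Field K]
    (I : Ideal (LaurentPolynomial K)) (hI : I ≠ ⊤) :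
    ∃ A : ℕ → Ideal (LaurentPolynomial K),
      (⨅ m, A m) ≤ I ∧ ∀ m, ¬ A m ≤ I := by
  classical
  haveI := LaurentPolynomial.isLocalization (R := K)
  haveI : IsDomain (LaurentPolynomial K) :=
    IsLocalization.isDomain_of_le_nonZeroDivisors (R := K[X]) (S := LaurentPolynomial K)
      (powers_le_nonZeroDivisors_of_noZeroDivisors (Polynomial.X_ne_zero (R := K)))
  haveI : IsNoetherianRing (LaurentPolynomial K) :=
    IsLocalization.isNoetherianRing (Submonoid.powers (Polynomial.X : K[X])) _ inferInstance
  -- a maximal ideal above `I`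
  obtain ⟨M, hM, hIM⟩ := Ideal.exists_le_maximal I hI
  -- its contraction to `K[X]`, a principal ideal
  set M' : Ideal K[X] := M.comap (algebraMap K[X] (LaurentPolynomial K)) with hM'def
  obtain ⟨f, hf⟩ := (IsPrincipalIdealRing.principal M').principal
  -- an auxiliary polynomial `q = g*X + 1` with `g ≠ 0` and `q ∉ M'`
  obtain ⟨g, hg0, hqM'⟩ : ∃ g : K[X], g ≠ 0 ∧ g * Polynomial.X + 1 ∉ M' := by
    by_cases h0 : f = 0
    · refine ⟨1, one_ne_zero, fun h => ?_⟩
      rw [hf, h0, Ideal.submodule_span_eq, Ideal.span_singleton_eq_bot.mpr rfl,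
        Ideal.mem_bot] at h
      have := congrArg (fun r : K[X] => r.coeff 0) h
      simp at this
    · refine ⟨f, h0, fun h => ?_⟩
      rw [hf, Ideal.submodule_span_eq, Ideal.mem_span_singleton] at h
      have h1 : f ∣ 1 := (dvd_add_right (dvd_mul_right f Polynomial.X)).mp h
      have hmem : (1 : K[X]) ∈ M' := by
        rw [hf, Ideal.submodule_span_eq, Ideal.mem_span_singleton]; exact h1
      exact hM.ne_top ((Ideal.eq_top_iff_one M).mpr (by have := Ideal.mem_comap.mp hmem; simpa using this))
  set q : K[X] := g * Polynomial.X + 1 with hq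
  set p : LaurentPolynomial K := Polynomial.toLaurent q with hp
  have hpM : p ∉ M := hqM'
  -- `p` is not a unit
  have hpu : ¬ IsUnit p := by
    intro hu
    obtain ⟨u, hu'⟩ := hu
    obtain ⟨n, b, hb⟩ := LaurentPolynomial.exists_T_pow (↑u⁻¹ : LaurentPolynomial K)
    have hqb : q * b = Polynomial.X ^ n := by
      apply Polynomial.toLaurent_injective
      rw [map_mul, hb, toLaurent_X_pow]
      calc Polynomial.toLaurent q * (↑u⁻¹ * T (n : ℤ))
          = (↑u * ↑u⁻¹ : LaurentPolynomial K) * T (n : ℤ) := by rw [hu']; ring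
        _ = T (n : ℤ) := by rw [u.mul_inv, one_mul]
    have hdvd : q ∣ Polynomial.X ^ n := ⟨b, hqb.symm⟩
    have hcop : IsCoprime (Polynomial.X ^ n) q := by
      refine IsCoprime.pow_left ⟨-g, 1, ?_⟩
      rw [hq]; ring
    have hqu : IsUnit q := hcop.isUnit_of_dvd' hdvd dvd_rfl
    have hdeg := natDegree_eq_zero_of_isUnit hqu
    rw [hq, ← Polynomial.C_1, natDegree_add_C, natDegree_mul_X hg0] at hdeg
    simp at hdeg
  -- powers of `p` avoid `I`
  have hpow : ∀ m : ℕ, p ^ m ∉ I := fun m hm =>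
    hpM (hM.isPrime.mem_of_pow_mem m (hIM hm))
  refine ⟨fun m => Ideal.span {p} ^ m, ?_, ?_⟩
  · have hbot : (⨅ m : ℕ, Ideal.span {p} ^ m) = ⊥ :=
      Ideal.iInf_pow_eq_bot_of_isDomain (Ideal.span {p})
        (fun h => hpu (Ideal.span_singleton_eq_top.mp h))
    exact hbot.le.trans bot_le
  · intro m hle
    exact hpow m (hle (Ideal.pow_mem_pow (Ideal.mem_span_singleton_self p) m))
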